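/- Let I be a finite nonempty index set, ρ₀ > 0, and a : I → ℝ with a(i) ≥ 0 for all i; assume the set Z := {i ∈ I : a(i) = 0} is nonempty and that a(i₁) > 0 for some i₁ ∈ I. Let x, y : ℕ → I → ℝ satisfy x_n(i) ≥ 2ρ₀ and y_n(i) ≥ 2ρ₀ for all n and i, and let c, c' : I → ℝ be such that x_n(i) − n·a(i) → c(i) and y_n(i) − n·a(i) → c'(i) as n → ∞, for every i ∈ I (note c(i), c'(i) ≥ 2ρ₀ for i ∈ Z). Then the sequence D(x_n, y_n) converges, with limit (1/2)·max(0, max_{i∈Z} log(c'(i)/c(i))) + (1/2)·max(0, max_{i∈Z} log(c(i)/c'(i))). (Abstract form of the proposition that for a positive Dehn twist g and any X, Y in Teichmüller space, d_h^Γ(gⁿX, gⁿY) converges to a constant C_{X,Y} as n → ∞.) -/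

import Mathlib

open Filter

/-- The abstract Hilbert distance between two strictly positive vectors:
`D(u,v) = (1/2)·max_i log(v i/u i) + (1/2)·max_i log(u i/v i)`. -/
noncomputable def Dtil {I : Type*} [Fintype I] [Nonempty I] (u v : I → ℝ) : ℝ :=
  (1 / 2) * (Finset.univ.sup' Finset.univ_nonempty fun i => Real.log (v i / u i)) +
  (1 / 2) * (Finset.univ.sup' Finset.univ_nonempty fun i => Real.log (u i / v i))

lemma aux17 {I : Type*} [Fintype I] [Nonempty I]
    (ρ₀ : ℝ) (hρ₀ : 0 < ρ₀)
    (a : I → ℝ) (ha : ∀ i, 0 ≤ a i)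
    (Z : Finset I) (hZdef : ∀ i : I, i ∈ Z ↔ a i = 0) (hZ : Z.Nonempty)
    (hpos : ∃ i₁ : I, 0 < a i₁)
    (x y : ℕ → I → ℝ)
    (hx : ∀ n i, 2 * ρ₀ ≤ x n i) (hy : ∀ n i, 2 * ρ₀ ≤ y n i)
    (c c' : I → ℝ)
    (hc : ∀ i, Tendsto (fun n : ℕ => x n i - n * a i) atTop (nhds (c i)))
    (hc' : ∀ i, Tendsto (fun n : ℕ => y n i - n * a i) atTop (nhds (c' i))) :
    Tendsto (fun n : ℕ => Finset.univ.sup' Finset.univ_nonempty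
      fun i => Real.log (y n i / x n i)) atTop
      (nhds (max 0 (Z.sup' hZ fun i => Real.log (c' i / c i)))) := by
  set g : I → ℝ := fun i => if a i = 0 then Real.log (c' i / c i) else 0 with hg
  have hc_pos : ∀ i, a i = 0 → 0 < c i := by
    intro i hai
    have : (2 : ℝ) * ρ₀ ≤ c i := by
      refine ge_of_tendsto' (hc i) fun n => ?_
      simpa [hai] using hx n i
    linarith
  have hc'_pos : ∀ i, a i = 0 → 0 < c' i := by
    intro i hai
    have : (2 : ℝ) * ρ₀ ≤ c' i := by
      refine ge_of_tendsto' (hc' i) fun n => ?_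
      simpa [hai] using hy n i
    linarith
  have hslope : ∀ (z : ℕ → I → ℝ) (d : I → ℝ),
      (∀ i, Tendsto (fun n : ℕ => z n i - n * a i) atTop (nhds (d i))) →
      ∀ i, Tendsto (fun n : ℕ => z n i / n) atTop (nhds (a i)) := by
    intro z d hd i
    have h1 : Tendsto (fun n : ℕ => (z n i - n * a i) / n + a i) atTop (nhds (0 + a i)) :=
      (Tendsto.div_atTop (hd i) tendsto_natCast_atTop_atTop).add tendsto_const_nhds
    rw [zero_add] at h1
    refine h1.congr' ?_
    filter_upwards [eventually_ge_atTop 1] with n hn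
    have hn0 : (n : ℝ) ≠ 0 := by positivity
    field_simp
    ring
  have hxpos : ∀ n i, 0 < x n i := fun n i => lt_of_lt_of_le (by linarith) (hx n i)
  have hypos : ∀ n i, 0 < y n i := fun n i => lt_of_lt_of_le (by linarith) (hy n i)
  have hpt : ∀ i, Tendsto (fun n : ℕ => Real.log (y n i / x n i)) atTop (nhds (g i)) := by
    intro i
    by_cases hai : a i = 0
    · have hxl : Tendsto (fun n : ℕ => x n i) atTop (nhds (c i)) := by
        simpa [hai] using hc i
      have hyl : Tendsto (fun n : ℕ => y n i) atTop (nhds (c' i)) := by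
        simpa [hai] using hc' i
      have hratio : Tendsto (fun n : ℕ => y n i / x n i) atTop (nhds (c' i / c i)) :=
        hyl.div hxl (ne_of_gt (hc_pos i hai))
      have := hratio.log (ne_of_gt (div_pos (hc'_pos i hai) (hc_pos i hai)))
      simpa [hg, hai] using this
    · have hax : 0 < a i := lt_of_le_of_ne (ha i) (Ne.symm hai)
      have hxl := hslope x c hc i
      have hyl := hslope y c' hc' i
      have hratio : Tendsto (fun n : ℕ => (y n i / n) / (x n i / n)) atTop
          (nhds (a i / a i)) := hyl.div hxl (ne_of_gt hax)
      rw [div_self (ne_of_gt hax)] at hratio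
      have hratio' : Tendsto (fun n : ℕ => y n i / x n i) atTop (nhds 1) := by
        refine hratio.congr' ?_
        filter_upwards [eventually_ge_atTop 1] with n hn
        have hn0 : (n : ℝ) ≠ 0 := by positivity
        have hx0 : x n i ≠ 0 := ne_of_gt (hxpos n i)
        field_simp
      have := hratio'.log one_ne_zero
      simpa [hg, hai] using this
  have hsup : Tendsto (fun n : ℕ => Finset.univ.sup' Finset.univ_nonempty
      fun i => Real.log (y n i / x n i)) atTop
      (nhds (Finset.univ.sup' Finset.univ_nonempty g)) := by
    exact Filter.Tendsto.finset_sup'_nhds_apply Finset.univ_nonempty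
      (fun i _ => hpt i)
  have heq : Finset.univ.sup' Finset.univ_nonempty g
      = max 0 (Z.sup' hZ fun i => Real.log (c' i / c i)) := by
    apply le_antisymm
    · apply Finset.sup'_le
      intro i _
      by_cases hai : a i = 0
      · refine le_max_of_le_right ?_
        have : i ∈ Z := (hZdef i).2 hai
        simp [hg, hai]
        exact ⟨i, this, le_rfl⟩
      · simp [hg, hai]
    · obtain ⟨i₁, hi₁⟩ := hpos
      apply max_le
      · have : g i₁ = 0 := by simp [hg, ne_of_gt hi₁]
        calc (0:ℝ) = g i₁ := this.symm
          _ ≤ _ := Finset.le_sup' g (Finset.mem_univ i₁)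
      · apply Finset.sup'_le
        intro i hi
        have hai := (hZdef i).1 hi
        calc Real.log (c' i / c i) = g i := by simp [hg, hai]
          _ ≤ _ := Finset.le_sup' g (Finset.mem_univ i)
  rw [← heq]
  exact hsup

/-- Abstract form of the proposition that for a positive Dehn twist `g`,
`d_h^Γ(gⁿX, gⁿY)` converges as `n → ∞`: if `x_n(i), y_n(i) ≥ 2ρ₀` grow linearly with
common slopes `a(i) ≥ 0` and asymptotic intercepts `c(i), c'(i)`, and the zero set
`Z = {i : a(i) = 0}` is nonempty while some `a(i₁) > 0`, then `D(x_n, y_n)` converges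
to `(1/2)·max(0, max_{i∈Z} log(c'(i)/c(i))) + (1/2)·max(0, max_{i∈Z} log(c(i)/c'(i)))`. -/
theorem stmt17 {I : Type*} [Fintype I] [Nonempty I]
    (ρ₀ : ℝ) (hρ₀ : 0 < ρ₀)
    (a : I → ℝ) (ha : ∀ i, 0 ≤ a i)
    (Z : Finset I) (hZdef : ∀ i : I, i ∈ Z ↔ a i = 0) (hZ : Z.Nonempty)
    (hpos : ∃ i₁ : I, 0 < a i₁)
    (x y : ℕ → I → ℝ)
    (hx : ∀ n i, 2 * ρ₀ ≤ x n i) (hy : ∀ n i, 2 * ρ₀ ≤ y n i)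
    (c c' : I → ℝ)
    (hc : ∀ i, Tendsto (fun n : ℕ => x n i - n * a i) atTop (nhds (c i)))
    (hc' : ∀ i, Tendsto (fun n : ℕ => y n i - n * a i) atTop (nhds (c' i))) :
    Tendsto (fun n : ℕ => Dtil (x n) (y n)) atTop
      (nhds ((1 / 2) * max 0 (Z.sup' hZ fun i => Real.log (c' i / c i)) +
        (1 / 2) * max 0 (Z.sup' hZ fun i => Real.log (c i / c' i)))) := by
  have h1 := aux17 ρ₀ hρ₀ a ha Z hZdef hZ hpos x y hx hy c c' hc hc'
  have h2 := aux17 ρ₀ hρ₀ a ha Z hZdef hZ hpos y x hy hx c' c hc' hc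
  simpa only [Dtil] using (h1.const_mul (1/2 : ℝ)).add (h2.const_mul (1/2 : ℝ))
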